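/- Let I ⊆ ℂ[x₀,…,x_{2n−1}] be an ideal and A a symmetric complex 2n×2n matrix whose quadratic polynomial q_A(x) = xᵀAx satisfies [f, q_A] ∈ I for every f ∈ I (in particular this holds if q_A ∈ I and I is closed under the Poisson bracket). Then the one-parameter subgroup generated by 2JA preserves the zero locus of I: for every x ∈ Z(I) and every t ∈ ℂ, exp(t·2JA)·x ∈ Z(I). -/

import Mathlib

open MvPolynomial Matrix

/-- The Poisson bracket on `ℂ[x₀,…,x_{2n−1}]` associated to the standard symplectic form:
`[f,g] = Σ_{i=0}^{n−1} (∂f/∂x_i · ∂g/∂x_{n+i} − ∂f/∂x_{n+i} · ∂g/∂x_i)`. -/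
noncomputable def poissonBracket (n : ℕ) (f g : MvPolynomial (Fin (2 * n)) ℂ) :
    MvPolynomial (Fin (2 * n)) ℂ :=
  ∑ i : Fin n,
    (pderiv (⟨i.1, by have := i.isLt; omega⟩ : Fin (2 * n)) f *
        pderiv (⟨n + i.1, by have := i.isLt; omega⟩ : Fin (2 * n)) g -
      pderiv (⟨n + i.1, by have := i.isLt; omega⟩ : Fin (2 * n)) f *
        pderiv (⟨i.1, by have := i.isLt; omega⟩ : Fin (2 * n)) g)

/-- The standard symplectic matrix `J = (0 Idₙ; −Idₙ 0)`. -/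
def Jmat (n : ℕ) : Matrix (Fin (2 * n)) (Fin (2 * n)) ℂ :=
  fun i j => if i.1 + n = j.1 then 1 else if j.1 + n = i.1 then -1 else 0

/-- The quadratic polynomial `q_A(x) = xᵀAx` of a `2n×2n` matrix `A`. -/
noncomputable def quadPoly (n : ℕ) (A : Matrix (Fin (2 * n)) (Fin (2 * n)) ℂ) :
    MvPolynomial (Fin (2 * n)) ℂ :=
  ∑ i : Fin (2 * n), ∑ j : Fin (2 * n), C (A i j) * X i * X j


lemma hasDerivAt_eval_comp {N : ℕ} (f : MvPolynomial (Fin N) ℂ) (γ : ℝ → Fin N → ℂ)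
    (d : Fin N → ℂ) (s : ℝ) (hγ : ∀ i, HasDerivAt (fun u => γ u i) (d i) s) :
    HasDerivAt (fun u => eval (γ u) f) (∑ i, eval (γ s) (pderiv i f) * d i) s := by
  induction f using MvPolynomial.induction_on with
  | C a =>
      simpa [pderiv_C] using (hasDerivAt_const s (a : ℂ))
  | add p q hp hq =>
      have := hp.add hq
      convert this using 1
      · rfl
      · ext u; simp
      · rw [← Finset.sum_add_distrib]
        exact Finset.sum_congr rfl fun i _ => by simp only [_root_.map_add]; ring
  | mul_X p i hp =>
      have key : ∀ j : Fin N, eval (γ s) (pderiv j (p * X i)) * d j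
          = eval (γ s) (pderiv j p) * d j * γ s i
            + (if j = i then eval (γ s) p * d j else 0) := by
        intro j
        rcases eq_or_ne j i with h | h
        · subst h; simp [pderiv_mul]; ring
        · simp [pderiv_mul, pderiv_X_of_ne h.symm, h]; ring
      have := hp.mul (hγ i)
      convert this using 1
      · rfl
      · ext u; simp
      · rw [Finset.sum_congr rfl (fun j _ => key j), Finset.sum_add_distrib,
          Finset.sum_ite_eq' Finset.univ i (fun j => eval (γ s) p * d j)]
        simp [Finset.sum_mul]

lemma sum_split (n : ℕ) (g : Fin (2 * n) → ℂ) :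
    ∑ j : Fin (2 * n), g j =
      ∑ i : Fin n, (g ⟨i.1, by have := i.isLt; omega⟩ + g ⟨n + i.1, by have := i.isLt; omega⟩) := by
  rw [← Equiv.sum_comp (finSumFinEquiv.trans (finCongr (two_mul n).symm)) g,
    Fintype.sum_sum_type, ← Finset.sum_add_distrib]
  apply Finset.sum_congr rfl
  intro i _
  congr 1 <;> · congr 1; apply Fin.ext; simp

lemma eval_pderiv_quadPoly {n : ℕ} (A : Matrix (Fin (2 * n)) (Fin (2 * n)) ℂ) (hA : A.IsSymm)
    (y : Fin (2 * n) → ℂ) (j : Fin (2 * n)) :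
    eval y (pderiv j (quadPoly n A)) = 2 * A.mulVec y j := by
  have h1 : ∀ i k : Fin (2 * n), eval y (pderiv j (C (A i k) * X i * X k))
      = (if i = j then A i k * y k else 0) + (if k = j then A i k * y i else 0) := by
    intro i k
    simp only [pderiv_mul, pderiv_C, pderiv_X, Pi.single_apply, zero_mul, add_zero, zero_add,
      _root_.map_add, _root_.map_mul, eval_C, eval_X]
    split_ifs <;> simp <;> ring
  have t1 : ∀ i : Fin (2 * n), (∑ k, if i = j then A i k * y k else 0)
      = if i = j then ∑ k, A i k * y k else 0 := fun i => by split <;> simp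
  have t2 : ∀ i : Fin (2 * n), (∑ k, if k = j then A i k * y i else 0) = A i j * y i :=
    fun i => by simp
  have t3 : (∑ x, A x j * y x) = ∑ x, A j x * y x :=
    Finset.sum_congr rfl fun i _ => by rw [hA.apply j i]
  rw [quadPoly, map_sum, map_sum]
  simp only [map_sum, h1, Finset.sum_add_distrib, t1, t2, Finset.sum_ite_eq',
    Finset.mem_univ, if_true, t3, Matrix.mulVec, dotProduct]
  ring

lemma Jmat_mulVec_lo {n : ℕ} (z : Fin (2 * n) → ℂ) (i : ℕ) (hi : i < n) :
    (Jmat n).mulVec z ⟨i, by omega⟩ = z ⟨n + i, by omega⟩ := by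
  simp only [Matrix.mulVec, dotProduct, Jmat]
  rw [Finset.sum_eq_single (⟨n + i, by omega⟩ : Fin (2 * n))]
  · have h : i + n = n + i := by omega
    simp [h]
  · intro b _ hb
    have h1 : ¬ (i + n = b.1) := fun h => hb (Fin.ext (by simp; omega))
    have h2 : ¬ (b.1 + n = i) := by omega
    simp [h1, h2]
  · simp

lemma Jmat_mulVec_hi {n : ℕ} (z : Fin (2 * n) → ℂ) (i : ℕ) (hi : i < n) :
    (Jmat n).mulVec z ⟨n + i, by omega⟩ = - z ⟨i, by omega⟩ := by
  simp only [Matrix.mulVec, dotProduct, Jmat]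
  rw [Finset.sum_eq_single (⟨i, by omega⟩ : Fin (2 * n))]
  · have h1 : ¬ ((n + i) + n = i) := by omega
    have h2 : i + n = n + i := by omega
    simp [h1, h2]
  · intro b _ hb
    have hb2 := b.isLt
    have h1 : ¬ ((n + i) + n = b.1) := by omega
    have h2 : ¬ (b.1 + n = n + i) := fun h => hb (Fin.ext (by simp; omega))
    simp [h1, h2]
  · simp

lemma eval_poissonBracket {n : ℕ} (A : Matrix (Fin (2 * n)) (Fin (2 * n)) ℂ) (hA : A.IsSymm)
    (f : MvPolynomial (Fin (2 * n)) ℂ) (y : Fin (2 * n) → ℂ) :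
    eval y (poissonBracket n f (quadPoly n A)) =
      ∑ j, eval y (pderiv j f) * (((2 : ℂ) • (Jmat n * A)).mulVec y) j := by
  rw [sum_split n (fun j => eval y (pderiv j f) * (((2 : ℂ) • (Jmat n * A)).mulVec y) j)]
  rw [poissonBracket, map_sum]
  apply Finset.sum_congr rfl
  intro i _
  have hi := i.isLt
  have hv : ((2 : ℂ) • (Jmat n * A)).mulVec y
      = (2 : ℂ) • (Jmat n).mulVec (A.mulVec y) := by
    rw [Matrix.smul_mulVec, Matrix.mulVec_mulVec]
  rw [map_sub, _root_.map_mul, _root_.map_mul,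
    eval_pderiv_quadPoly A hA y ⟨i.1, by omega⟩,
    eval_pderiv_quadPoly A hA y ⟨n + i.1, by omega⟩, hv]
  simp only [Pi.smul_apply, smul_eq_mul]
  rw [Jmat_mulVec_lo (A.mulVec y) i.1 hi, Jmat_mulVec_hi (A.mulVec y) i.1 hi]
  ring


/-- Derivative of each coordinate of the curve `s ↦ exp(sB)·x`. -/
lemma curve_hasDerivAt {N : ℕ} (B : Matrix (Fin N) (Fin N) ℂ) (x : Fin N → ℂ)
    (s : ℝ) (i : Fin N) :
    HasDerivAt (fun u : ℝ => (NormedSpace.exp ((u : ℂ) • B)).mulVec x i)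
      ((B.mulVec ((NormedSpace.exp ((s : ℂ) • B)).mulVec x)) i) s := by
  letI : SeminormedRing (Matrix (Fin N) (Fin N) ℂ) := Matrix.linftyOpSemiNormedRing
  letI : NormedRing (Matrix (Fin N) (Fin N) ℂ) := Matrix.linftyOpNormedRing
  letI : NormedAlgebra ℂ (Matrix (Fin N) (Fin N) ℂ) := Matrix.linftyOpNormedAlgebra
  have hexp : HasDerivAt (fun u : ℂ => NormedSpace.exp (u • B))
      (B * NormedSpace.exp ((s : ℂ) • B)) ((s : ℝ) : ℂ) :=
    hasDerivAt_exp_smul_const' B ((s : ℝ) : ℂ)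
  have hofr : HasDerivAt (fun y : ℝ => (y : ℂ)) (1 : ℂ) s := by
    have h := Complex.ofRealCLM.hasDerivAt (x := s)
    simp at h
    exact h
  have hre := HasDerivAt.scomp (x := s) hexp hofr
  rw [one_smul] at hre
  let φ : Matrix (Fin N) (Fin N) ℂ →ₗ[ℂ] ℂ :=
    { toFun := fun M => M.mulVec x i
      map_add' := fun M N => by simp [Matrix.add_mulVec]
      map_smul' := fun r M => by simp [Matrix.smul_mulVec] }
  have := ((φ.toContinuousLinearMap.restrictScalars ℝ).hasFDerivAt
    (x := NormedSpace.exp ((s:ℂ) • B))).comp_hasDerivAt s hre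
  convert this using 1
  show _ = (φ.toContinuousLinearMap.restrictScalars ℝ) (B * NormedSpace.exp ((s : ℂ) • B))
  simp only [ContinuousLinearMap.coe_restrictScalars', LinearMap.coe_toContinuousLinearMap', φ,
    LinearMap.coe_mk, AddHom.coe_mk]
  rw [← Matrix.mulVec_mulVec]
  · rfl
  · rfl


/-- A finite linear ODE with continuous coefficients: a solution vanishing at `0` vanishes at `1`. -/
lemma ode_vanish_at_one {ι : Type*} [Fintype ι] (u : ℝ → ι → ℂ) (e : ℝ → ι → ι → ℂ)
    (hce : ∀ i j, Continuous fun s => e s i j)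
    (hder : ∀ (s : ℝ) (i : ι), HasDerivAt (fun s' => u s' i) (∑ j, e s i j * u s j) s)
    (h0 : u 0 = 0) : u 1 = 0 := by
  classical
  set σf : ℝ → ℝ := fun s => max 0 (min 1 s) with hσdef
  have hσmem : ∀ s, σf s ∈ Set.Icc (0:ℝ) 1 :=
    fun s => ⟨le_max_left _ _, max_le zero_le_one (min_le_left _ _)⟩
  have hσeq : ∀ s ∈ Set.Ico (0:ℝ) 1, σf s = s := by
    intro s hs
    rw [hσdef]
    simp only [min_eq_right hs.2.le, max_eq_right hs.1]
  set hfun : ℝ → ℝ := fun s => ∑ q : ι × ι, ‖e s q.1 q.2‖ with hfdef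
  have hfc : Continuous hfun := continuous_finset_sum _ fun q _ => (hce q.1 q.2).norm
  obtain ⟨C, hC⟩ := (isCompact_Icc.image hfc).bddAbove
  have hCb : ∀ s, hfun (σf s) ≤ C := fun s => hC (Set.mem_image_of_mem _ (hσmem s))
  set K : NNReal := Real.toNNReal C with hKdef
  have hKb : ∀ s, hfun (σf s) ≤ (K : ℝ) := fun s =>
    (hCb s).trans (by rw [hKdef, Real.coe_toNNReal']; exact le_max_left _ _)
  set v : ℝ → (ι → ℂ) → (ι → ℂ) := fun s w i => ∑ j, e (σf s) i j * w j with hvdef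
  have hlip : ∀ s, LipschitzOnWith K (v s) Set.univ := by
    intro s
    refine (LipschitzWith.of_dist_le_mul ?_).lipschitzOnWith
    intro w₁ w₂
    rw [dist_pi_le_iff (mul_nonneg K.coe_nonneg dist_nonneg)]
    intro i
    rw [dist_eq_norm]
    have hsub : v s w₁ i - v s w₂ i = ∑ j, e (σf s) i j * (w₁ j - w₂ j) := by
      rw [hvdef]
      simp only [← Finset.sum_sub_distrib, ← mul_sub]
    rw [hsub]
    have h2 : ‖∑ j, e (σf s) i j * (w₁ j - w₂ j)‖
        ≤ (∑ j, ‖e (σf s) i j‖) * dist w₁ w₂ := by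
      refine (norm_sum_le _ _).trans ?_
      rw [Finset.sum_mul]
      refine Finset.sum_le_sum fun j _ => ?_
      rw [norm_mul]
      exact mul_le_mul_of_nonneg_left
        (by rw [← dist_eq_norm]; exact dist_le_pi_dist w₁ w₂ j) (norm_nonneg _)
    have h3 : (∑ j, ‖e (σf s) i j‖) ≤ hfun (σf s) := by
      rw [hfdef]
      simp only []
      rw [Fintype.sum_prod_type]
      exact Finset.single_le_sum (f := fun i0 => ∑ j, ‖e (σf s) i0 j‖)
        (fun _ _ => Finset.sum_nonneg fun _ _ => norm_nonneg _) (Finset.mem_univ i)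
    calc ‖∑ j, e (σf s) i j * (w₁ j - w₂ j)‖
        ≤ hfun (σf s) * dist w₁ w₂ :=
          h2.trans (mul_le_mul_of_nonneg_right h3 dist_nonneg)
      _ ≤ (K : ℝ) * dist w₁ w₂ := mul_le_mul_of_nonneg_right (hKb s) dist_nonneg
  have hu' : ∀ s ∈ Set.Ico (0:ℝ) 1, HasDerivWithinAt u (v s (u s)) (Set.Ici s) s := by
    intro s hs
    refine (hasDerivAt_pi.2 fun i => ?_).hasDerivWithinAt
    have := hder s i
    convert this using 1
    · rfl
    rw [hvdef]
    simp only [hσeq s hs]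
  have hcontu : ContinuousOn u (Set.Icc (0:ℝ) 1) := by
    refine (continuous_pi fun i => ?_).continuousOn
    exact continuous_iff_continuousAt.2 fun s => (hder s i).continuousAt
  have hzero' : ∀ s ∈ Set.Ico (0:ℝ) 1,
      HasDerivWithinAt (fun _ : ℝ => (0 : ι → ℂ))
        (v s ((fun _ : ℝ => (0 : ι → ℂ)) s)) (Set.Ici s) s := by
    intro s _
    have hz : v s (0 : ι → ℂ) = 0 := by
      funext i; simp [hvdef]
    rw [hz]
    exact (hasDerivAt_const s _).hasDerivWithinAt
  have hEq := ODE_solution_unique_of_mem_Icc_right (v := v) (s := fun _ => Set.univ)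
    (fun s _ => hlip s) hcontu hu' (fun _ _ => trivial) continuousOn_const hzero' (fun _ _ => trivial) h0
  exact hEq (Set.right_mem_Icc.2 zero_le_one)


set_option maxHeartbeats 1000000 in
/-- If `A` is symmetric and `[f, q_A] ∈ I` for all `f ∈ I`, then the one-parameter subgroup
`exp(t·2JA)` preserves the zero locus of `I`. -/
theorem exp_preserves_zeroLocus (n : ℕ) (I : Ideal (MvPolynomial (Fin (2 * n)) ℂ))
    (A : Matrix (Fin (2 * n)) (Fin (2 * n)) ℂ) (hA : A.IsSymm)
    (hbr : ∀ f ∈ I, poissonBracket n f (quadPoly n A) ∈ I) :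
    ∀ x : Fin (2 * n) → ℂ, (∀ f ∈ I, eval x f = 0) → ∀ t : ℂ, ∀ f ∈ I,
      eval ((NormedSpace.exp (t • ((2 : ℂ) • (Jmat n * A)))).mulVec x) f = 0 := by
  classical
  intro x hx t f hf
  set M2 : Matrix (Fin (2*n)) (Fin (2*n)) ℂ := (2:ℂ) • (Jmat n * A) with hM2
  set B : Matrix (Fin (2*n)) (Fin (2*n)) ℂ := t • M2 with hBdef
  set γ : ℝ → Fin (2*n) → ℂ := fun s => (NormedSpace.exp ((s : ℂ) • B)).mulVec x with hγdef
  have hder : ∀ (s : ℝ) (i : Fin (2*n)),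
      HasDerivAt (fun u : ℝ => γ u i) ((B.mulVec (γ s)) i) s :=
    fun s i => curve_hasDerivAt B x s i
  have hcont : ∀ p : MvPolynomial (Fin (2*n)) ℂ, Continuous (fun s => eval (γ s) p) :=
    fun p => continuous_iff_continuousAt.2 fun s =>
      (hasDerivAt_eval_comp p γ _ s (hder s)).continuousAt
  obtain ⟨S, hS⟩ := IsNoetherian.noetherian I
  have hSI : ∀ g : {p // p ∈ S}, (g : MvPolynomial (Fin (2*n)) ℂ) ∈ I := fun g =>
    hS ▸ Submodule.subset_span g.2
  have hcex : ∀ g : {p // p ∈ S}, ∃ cg : {p // p ∈ S} → MvPolynomial (Fin (2*n)) ℂ,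
      poissonBracket n g.1 (quadPoly n A) = ∑ g' : {p // p ∈ S}, cg g' * g'.1 := by
    intro g
    have hb := hbr g.1 (hSI g)
    rw [← hS] at hb
    obtain ⟨cf, -, hcf⟩ := Submodule.mem_span_finset.1 hb
    refine ⟨fun g' => cf g'.1, ?_⟩
    rw [← hcf, ← Finset.sum_coe_sort S (fun i => cf i • i)]
    simp [smul_eq_mul]
  choose c hc using hcex
  set u : ℝ → ({p // p ∈ S} → ℂ) := fun s g => eval (γ s) g.1 with hudef
  have hu : ∀ (s : ℝ) (g : {p // p ∈ S}), HasDerivAt (fun s' => u s' g)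
      (∑ g' : {p // p ∈ S}, (t * eval (γ s) (c g g')) * u s g') s := by
    intro s g
    have h1 := hasDerivAt_eval_comp g.1 γ (B.mulVec (γ s)) s (hder s)
    convert h1 using 1
    have hBv : B.mulVec (γ s) = t • (M2.mulVec (γ s)) := by
      rw [hBdef, Matrix.smul_mulVec]
    rw [hBv]
    have h2 : (∑ i, eval (γ s) (pderiv i g.1) * (t • M2.mulVec (γ s)) i)
        = t * ∑ i, eval (γ s) (pderiv i g.1) * (M2.mulVec (γ s)) i := by
      rw [Finset.mul_sum]
      exact Finset.sum_congr rfl fun i _ => by simp [smul_eq_mul]; ring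
    rw [h2, ← eval_poissonBracket A hA g.1 (γ s), hc g, map_sum, Finset.mul_sum]
    exact Finset.sum_congr rfl fun g' _ => by rw [_root_.map_mul]; ring
  have hinit : u 0 = 0 := by
    funext g
    have hγ0 : γ 0 = x := by
      rw [hγdef]
      simp [NormedSpace.exp_zero]
    show eval (γ 0) g.1 = 0
    rw [hγ0]
    exact hx g.1 (hSI g)
  have hu1 : u 1 = 0 :=
    ode_vanish_at_one u (fun s g g' => t * eval (γ s) (c g g'))
      (fun g g' => continuous_const.mul (hcont _)) hu hinit
  have hall : ∀ p ∈ I, eval (γ 1) p = 0 := by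
    intro p hp
    rw [← hS] at hp
    refine Submodule.span_induction ?_ ?_ ?_ ?_ hp
    · intro q hq
      exact congrFun hu1 ⟨q, hq⟩
    · simp
    · intro a b _ _ ha hb
      rw [_root_.map_add, ha, hb, add_zero]
    · intro r a _ ha
      rw [smul_eq_mul, _root_.map_mul, ha, mul_zero]
  have hγ1 : γ 1 = (NormedSpace.exp B).mulVec x := by
    rw [hγdef]
    norm_num
  have := hall f hf
  rwa [hγ1] at this
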